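/- Fix s' ∈ (s₀, s₁) and i > p. Then for every s ∈ (s', s₁), the function s ↦ G⁺_{ij}(s, s') is differentiable and satisfies i·∂_s G⁺_{ij}(s, s') = ż(s)·Σ_{k=1}^d h_{ik}(s) G⁺_{kj}(s, s') for all j = 1,…,d. -/

import Mathlib

open ContinuousLinearMap

set_option maxHeartbeats 2000000
set_option synthInstance.maxHeartbeats 1000000

/-- **Differential equation in the first contour variable for the greater
Green's function (non-equilibrium fermionic case).**
For a time-dependent impurity Hamiltonian with fragment `{1,…,p}` and any row
index `i` outside the fragment, for `s' < s` the greater Green's function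
satisfies `i·∂_s G⁺_{ij}(s,s') = ż(s)·Σ_k h_{ik}(s) G⁺_{kj}(s,s')`,
i.e. it is differentiable in `s` with derivative
`−i·ż(s)·Σ_k h_{ik}(s) G⁺_{kj}(s,s')`. -/
theorem noneq_greater_green_deriv_first_var
    (d p : ℕ) (V : Type*) [NormedAddCommGroup V] [InnerProductSpace ℂ V]
    [FiniteDimensional ℂ V]
    (a : Fin d → (V →L[ℂ] V))
    (hcar1 : ∀ i j : Fin d, a i * a j + a j * a i = 0)
    (hcar2 : ∀ i j : Fin d,
      a i * adjoint (a j) + adjoint (a j) * a i = if i = j then 1 else 0)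
    (s₀ s₁ : ℝ) (hs : s₀ < s₁)
    (zdot : ℝ → ℂ) (hzdot : ContinuousOn zdot (Set.Ioo s₀ s₁))
    (h : ℝ → Matrix (Fin d) (Fin d) ℂ)
    (hhcont : ∀ i j : Fin d, ContinuousOn (fun s => h s i j) (Set.Ioo s₀ s₁))
    (hherm : ∀ s : ℝ, (h s).IsHermitian)
    (Uop : ℝ → (V →L[ℂ] V)) (hUcont : ContinuousOn Uop (Set.Ioo s₀ s₁))
    (hUcomm : ∀ s : ℝ, ∀ j : Fin d, p ≤ (j : ℕ) →
      Uop s * a j = a j * Uop s ∧ Uop s * adjoint (a j) = adjoint (a j) * Uop s)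
    (H : ℝ → (V →L[ℂ] V))
    (hHdef : ∀ s : ℝ, H s = (∑ i, ∑ j, h s i j • (adjoint (a i) * a j)) + Uop s)
    (U : ℝ → ℝ → (V →L[ℂ] V))
    (hUder1 : ∀ s' ∈ Set.Icc s₀ s₁, ∀ s ∈ Set.Ioo s₀ s₁,
      HasDerivAt (fun t => U t s') ((-Complex.I * zdot s) • (H s * U s s')) s)
    (hUder2 : ∀ s ∈ Set.Icc s₀ s₁, ∀ s' ∈ Set.Ioo s₀ s₁,
      HasDerivAt (fun t => U s t) ((Complex.I * zdot s') • (U s s' * H s')) s')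
    (hUid : ∀ s ∈ Set.Icc s₀ s₁, U s s = 1)
    (hUgroup : ∀ s ∈ Set.Icc s₀ s₁, ∀ s'' ∈ Set.Icc s₀ s₁, ∀ s' ∈ Set.Icc s₀ s₁,
      U s s'' * U s'' s' = U s s')
    (Z : ℂ) (hZdef : Z = LinearMap.trace ℂ V (U s₁ s₀ : V →ₗ[ℂ] V)) (hZ : Z ≠ 0)
    (Gp : Fin d → Fin d → ℝ → ℝ → ℂ)
    (hGpdef : ∀ i j : Fin d, ∀ s s' : ℝ, Gp i j s s' = (-Complex.I / Z) *
      LinearMap.trace ℂ V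
        ((U s₁ s * a i * U s s' * adjoint (a j) * U s' s₀ : V →L[ℂ] V) : V →ₗ[ℂ] V))
    (s' : ℝ) (hs' : s' ∈ Set.Ioo s₀ s₁)
    (i : Fin d) (hi : p ≤ (i : ℕ)) :
    ∀ s ∈ Set.Ioo s' s₁, ∀ j : Fin d,
      HasDerivAt (fun t => Gp i j t s')
        (-Complex.I * zdot s * ∑ k, h s i k * Gp k j s s') s := by
  intro s hsmem j
  have hsI : s ∈ Set.Ioo s₀ s₁ := ⟨lt_trans hs'.1 hsmem.1, hsmem.2⟩
  have hs'Icc : s' ∈ Set.Icc s₀ s₁ := ⟨hs'.1.le, hs'.2.le⟩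
  set z := zdot s with hz
  set C : V →L[ℂ] V := adjoint (a j) * U s' s₀ with hC
  set S : V →L[ℂ] V := ∑ k, h s i k • a k with hS
  -- commutator per term
  have hterm : ∀ k l : Fin d,
      (adjoint (a k) * a l) * a i - a i * (adjoint (a k) * a l)
        = -(if i = k then a l else 0) := by
    intro k l
    have e1 : a l * a i = -(a i * a l) := eq_neg_of_add_eq_zero_left (hcar1 l i)
    have e2 : a i * adjoint (a k)
        = (if i = k then (1 : V →L[ℂ] V) else 0) - adjoint (a k) * a i :=
      eq_sub_of_add_eq (hcar2 i k)
    have e3 : (if i = k then (1 : V →L[ℂ] V) else 0) * a l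
        = (if i = k then a l else 0) := by split_ifs <;> simp
    calc (adjoint (a k) * a l) * a i - a i * (adjoint (a k) * a l)
        = adjoint (a k) * (a l * a i) - (a i * adjoint (a k)) * a l := by
          rw [mul_assoc, mul_assoc]
      _ = adjoint (a k) * (-(a i * a l))
            - ((if i = k then (1 : V →L[ℂ] V) else 0) - adjoint (a k) * a i) * a l := by
          rw [e1, e2]
      _ = -(if i = k then a l else 0) := by
          rw [mul_neg, sub_mul, e3, mul_assoc]; abel
  have hcomm : H s * a i - a i * H s = -S := by
    rw [hHdef]
    rw [add_mul, mul_add, (hUcomm s i hi).1]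
    have hmain : (∑ k, ∑ l, h s k l • (adjoint (a k) * a l)) * a i
        - a i * (∑ k, ∑ l, h s k l • (adjoint (a k) * a l)) = -S := by
      rw [Finset.sum_mul, Finset.mul_sum, ← Finset.sum_sub_distrib]
      have step : ∀ k : Fin d, ((∑ l, h s k l • (adjoint (a k) * a l)) * a i
          - a i * ∑ l, h s k l • (adjoint (a k) * a l))
          = if i = k then -(∑ l, h s k l • a l) else 0 := by
        intro k
        rw [Finset.sum_mul, Finset.mul_sum, ← Finset.sum_sub_distrib]
        have hl : ∀ l : Fin d, (h s k l • (adjoint (a k) * a l)) * a i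
            - a i * (h s k l • (adjoint (a k) * a l))
            = if i = k then -(h s k l • a l) else 0 := by
          intro l
          rw [smul_mul_assoc, mul_smul_comm, ← smul_sub, hterm k l]
          split_ifs <;> simp
        rw [Finset.sum_congr rfl fun l _ => hl l]
        split_ifs <;> simp
      rw [Finset.sum_congr rfl fun k _ => step k]
      simp [hS]
    rw [← hmain]; abel
  -- derivatives of the evolution family
  have h1 : HasDerivAt (fun t => U s₁ t) ((Complex.I * z) • (U s₁ s * H s)) s :=
    hUder2 s₁ ⟨hs.le, le_rfl⟩ s hsI
  have h2 : HasDerivAt (fun t => U t s') ((-Complex.I * z) • (H s * U s s')) s :=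
    hUder1 s' hs'Icc s hsI
  have hprod : HasDerivAt (fun t => U s₁ t * a i * U t s' * C)
      ((((Complex.I * z) • (U s₁ s * H s)) * a i * U s s'
        + U s₁ s * a i * ((-Complex.I * z) • (H s * U s s'))) * C) s :=
    ((h1.mul_const (a i)).mul h2).mul_const C
  have hDval : (((Complex.I * z) • (U s₁ s * H s)) * a i * U s s'
        + U s₁ s * a i * ((-Complex.I * z) • (H s * U s s'))) * C
      = (-Complex.I * z) • ∑ k, h s i k • (U s₁ s * a k * U s s' * C) := by
    have hHa : H s * a i = a i * H s + -S := sub_eq_iff_eq_add'.mp hcomm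
    have hSX : S * (U s s' * C) = ∑ k, h s i k • (a k * (U s s' * C)) := by
      rw [hS, Finset.sum_mul]
      exact Finset.sum_congr rfl fun k _ => smul_mul_assoc _ _ _
    have hkey : U s₁ s * (H s * (a i * (U s s' * C)))
        = U s₁ s * (a i * (H s * (U s s' * C)))
          - ∑ k, h s i k • (U s₁ s * (a k * (U s s' * C))) := by
      have e : H s * (a i * (U s s' * C)) = (H s * a i) * (U s s' * C) :=
        (mul_assoc _ _ _).symm
      rw [e, hHa, add_mul, neg_mul, mul_add, mul_neg, hSX, Finset.mul_sum, mul_assoc]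
      rw [sub_eq_add_neg]
      congr 1
      exact congrArg Neg.neg (Finset.sum_congr rfl fun k _ => mul_smul_comm _ _ _)
    simp only [smul_mul_assoc, mul_smul_comm, add_mul, mul_assoc]
    rw [hkey, smul_sub, neg_mul, neg_smul, neg_smul]
    abel
  -- trace functional
  haveI : CompleteSpace V := FiniteDimensional.complete ℂ V
  haveI : FiniteDimensional ℂ (V →L[ℂ] V) :=
    (LinearMap.toContinuousLinearMap (E := V) (F' := V)).finiteDimensional
  set φ : (V →L[ℂ] V) →ₗ[ℂ] ℂ :=
    (LinearMap.trace ℂ V) ∘ₗ (ContinuousLinearMap.coeLM ℂ) with hφdef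
  have hφ : ∀ T : V →L[ℂ] V, φ T = LinearMap.trace ℂ V (T : V →ₗ[ℂ] V) :=
    fun T => rfl
  have hΦ : HasDerivAt (fun t => φ (U s₁ t * a i * U t s' * C))
      (φ ((-Complex.I * z) • ∑ k, h s i k • (U s₁ s * a k * U s s' * C))) s := by
    have hprod' : HasDerivAt (fun t => U s₁ t * a i * U t s' * C)
        ((-Complex.I * z) • ∑ k, h s i k • (U s₁ s * a k * U s s' * C)) s := by
      rw [hDval] at hprod; exact hprod
    let Φ : (V →L[ℂ] V) →L[ℂ] ℂ :=
      ⟨φ, φ.continuous_of_finiteDimensional⟩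
    have hc : HasFDerivAt (fun T : V →L[ℂ] V => φ T) (Φ.restrictScalars ℝ)
        (U s₁ s * a i * U s s' * C) := (Φ.restrictScalars ℝ).hasFDerivAt
    have := hc.comp_hasDerivAt s hprod'
    exact this
  have hfinal := hΦ.const_mul (-Complex.I / Z)
  have hGp' : ∀ k : Fin d, Gp k j s s'
      = (-Complex.I / Z) * φ (U s₁ s * a k * U s s' * C) := by
    intro k
    rw [hGpdef, hφ, hC, mul_assoc]
  have hfun : (fun t => Gp i j t s')
      = fun t => (-Complex.I / Z) * φ (U s₁ t * a i * U t s' * C) := by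
    funext t
    rw [hGpdef, hφ, hC, mul_assoc]
  rw [hfun]
  refine hfinal.congr_deriv (Eq.symm ?_)
  rw [map_smul, map_sum]
  simp only [map_smul, smul_eq_mul]
  rw [Finset.mul_sum, Finset.mul_sum, Finset.mul_sum]
  refine Finset.sum_congr rfl fun k _ => ?_
  rw [hGp' k]
  ring
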